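/- Let Ω be a bounded domain with upper Minkowski dimension M(∂Ω) = 2 − θ for some θ ∈ (0,1]. Fix θ' < θ. On a square grid of mesh δ, let n_k denote the number of grid boxes at distance kδ (i.e., k boxes) from ∂Ω and N_l = Σ_{k ≤ l} n_k. Then there is a constant C_{θ'} such that for all δ > 0 and all l ≥ 1, N_l ≤ C_{θ'} n^{2−θ'} l^{θ'}, where n = δ^{−1}. -/

import Mathlib

open Set Filter

/-- The grid box of mesh `δ` indexed by `p : ℤ × ℤ`. -/
def gridBox (δ : ℝ) (p : ℤ × ℤ) : Set ℂ :=
  {z : ℂ | z.re ∈ Set.Ico ((p.1 : ℝ) * δ) (((p.1 : ℝ) + 1) * δ) ∧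
           z.im ∈ Set.Ico ((p.2 : ℝ) * δ) (((p.2 : ℝ) + 1) * δ)}

/-- Number of grid boxes of mesh `δ` needed to cover `S` (those meeting `S`). -/
noncomputable def boxCount (δ : ℝ) (S : Set ℂ) : ℕ :=
  Set.ncard {p : ℤ × ℤ | (gridBox δ p ∩ S).Nonempty}

/-- The upper Minkowski dimension `M(S) = limsup_{δ→0⁺} log 𝒩(δ) / log(1/δ)`. -/
noncomputable def upperMinkDim (S : Set ℂ) : ℝ :=
  Filter.limsup (fun δ : ℝ => Real.log (boxCount δ S) / Real.log (1 / δ))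
    (nhdsWithin 0 (Set.Ioi 0))

/-- `N_l`: the number of mesh-`δ` grid boxes meeting `Ω` and lying within distance
`l·δ` of `∂Ω` (i.e. `Σ_{k ≤ l} n_k`). -/
noncomputable def nearBoundaryCount (Ω : Set ℂ) (δ : ℝ) (l : ℕ) : ℕ :=
  Set.ncard {p : ℤ × ℤ | (gridBox δ p ∩ Ω).Nonempty ∧
    ∃ z ∈ gridBox δ p, Metric.infDist z (frontier Ω) ≤ (l : ℝ) * δ}

-- 1D: index determined
lemma idx_eq {δ : ℝ} (hδ : 0 < δ) {m : ℤ} {x : ℝ}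
    (h : x ∈ Set.Ico ((m:ℝ)*δ) (((m:ℝ)+1)*δ)) : m = ⌊x/δ⌋ := by
  symm
  rw [Int.floor_eq_iff]
  constructor
  · rw [le_div_iff₀ hδ]; exact h.1
  · rw [div_lt_iff₀ hδ]; exact h.2

-- 1D: membership of floor index
lemma mem_idx {δ : ℝ} (hδ : 0 < δ) (x : ℝ) :
    x ∈ Set.Ico ((⌊x/δ⌋:ℝ)*δ) (((⌊x/δ⌋:ℝ)+1)*δ) := by
  constructor
  · rw [← le_div_iff₀ hδ]; exact Int.floor_le _
  · rw [← div_lt_iff₀ hδ]; exact Int.lt_floor_add_one _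

lemma mem_gridBox_floor {δ : ℝ} (hδ : 0 < δ) (z : ℂ) :
    z ∈ gridBox δ (⌊z.re/δ⌋, ⌊z.im/δ⌋) :=
  ⟨mem_idx hδ _, mem_idx hδ _⟩

-- coarse box containment
lemma gridBox_subset_coarse {δ : ℝ} (hδ : 0 < δ) {l : ℕ} (hl : 0 < l) (p : ℤ × ℤ) :
    gridBox δ p ⊆ gridBox ((l:ℝ)*δ) (p.1 / (l:ℤ), p.2 / (l:ℤ)) := by
  have hl' : (0:ℤ) < (l:ℤ) := by exact_mod_cast hl
  rintro z ⟨⟨h1, h2⟩, ⟨h3, h4⟩⟩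
  have key : ∀ m : ℤ, ∀ x : ℝ, (m:ℝ)*δ ≤ x → x < ((m:ℝ)+1)*δ →
      ((m / (l:ℤ) : ℤ):ℝ) * ((l:ℝ)*δ) ≤ x ∧ x < (((m / (l:ℤ) : ℤ):ℝ)+1) * ((l:ℝ)*δ) := by
    intro m x ha hb
    have e1 : (m / (l:ℤ)) * (l:ℤ) ≤ m := Int.ediv_mul_le m (by positivity)
    have e2 : m < (m / (l:ℤ) + 1) * (l:ℤ) := Int.lt_ediv_add_one_mul_self m hl'
    have e1' : ((m / (l:ℤ) : ℤ):ℝ) * (l:ℝ) ≤ (m:ℝ) := by exact_mod_cast e1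
    have e2' : (m:ℝ) + 1 ≤ (((m / (l:ℤ)):ℤ):ℝ) * (l:ℝ) + (l:ℝ) := by
      have h : m + 1 ≤ (m / (l:ℤ)) * (l:ℤ) + (l:ℤ) := by nlinarith [e2]
      exact_mod_cast h
    constructor
    · calc ((m / (l:ℤ) : ℤ):ℝ) * ((l:ℝ)*δ) = ((m / (l:ℤ) : ℤ):ℝ) * (l:ℝ) * δ := by ring
        _ ≤ (m:ℝ) * δ := by gcongr
        _ ≤ x := ha
    · calc x < ((m:ℝ)+1)*δ := hb
        _ ≤ (((m / (l:ℤ)):ℤ):ℝ) * (l:ℝ) * δ + (l:ℝ) * δ := by nlinarith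
        _ = (((m / (l:ℤ) : ℤ):ℝ)+1) * ((l:ℝ)*δ) := by ring
  exact ⟨⟨(key p.1 z.re h1 h2).1, (key p.1 z.re h1 h2).2⟩,
         ⟨(key p.2 z.im h3 h4).1, (key p.2 z.im h3 h4).2⟩⟩

-- trivial counting bound for subsets of a closed ball
lemma gridCount_subset {δ r : ℝ} (hδ : 0 < δ) {S : Set ℂ} (hS : S ⊆ Metric.closedBall 0 r) :
    {p : ℤ × ℤ | (gridBox δ p ∩ S).Nonempty} ⊆
      Set.Icc ⌊(-r)/δ⌋ ⌊r/δ⌋ ×ˢ Set.Icc ⌊(-r)/δ⌋ ⌊r/δ⌋ := by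
  rintro p ⟨z, hz, hzS⟩
  have hn : ‖z‖ ≤ r := by
    have := hS hzS
    rwa [Metric.mem_closedBall, Complex.dist_eq, sub_zero] at this
  have hre : |z.re| ≤ r := le_trans (Complex.abs_re_le_norm z) hn
  have him : |z.im| ≤ r := le_trans (Complex.abs_im_le_norm z) hn
  have key : ∀ m : ℤ, ∀ x : ℝ, |x| ≤ r → x ∈ Set.Ico ((m:ℝ)*δ) (((m:ℝ)+1)*δ) →
      m ∈ Set.Icc ⌊(-r)/δ⌋ ⌊r/δ⌋ := by
    intro m x hx hm
    rw [idx_eq hδ hm]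
    obtain ⟨hx1, hx2⟩ := abs_le.mp hx
    exact ⟨Int.floor_le_floor (by apply div_le_div_of_nonneg_right hx1 hδ.le),
           Int.floor_le_floor (by apply div_le_div_of_nonneg_right hx2 hδ.le)⟩
  exact ⟨key p.1 z.re hre hz.1, key p.2 z.im him hz.2⟩

lemma gridCount_fin {δ r : ℝ} (hδ : 0 < δ) {S : Set ℂ} (hS : S ⊆ Metric.closedBall 0 r) :
    {p : ℤ × ℤ | (gridBox δ p ∩ S).Nonempty}.Finite :=
  Set.Finite.subset ((Set.finite_Icc _ _).prod (Set.finite_Icc _ _)) (gridCount_subset hδ hS)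

lemma ncard_Icc_int (a b : ℤ) : (Set.Icc a b).ncard = (b + 1 - a).toNat := by
  rw [← Finset.coe_Icc, Set.ncard_coe_finset, Int.card_Icc]

lemma ncard_Ico_int (a b : ℤ) : (Set.Ico a b).ncard = (b - a).toNat := by
  rw [← Finset.coe_Ico, Set.ncard_coe_finset, Int.card_Ico]

lemma ncard_prod_fin {α β : Type*} {s : Set α} {t : Set β} (hs : s.Finite) (ht : t.Finite) :
    (s ×ˢ t).ncard = s.ncard * t.ncard := by
  rw [← hs.coe_toFinset, ← ht.coe_toFinset, ← Finset.coe_product, Set.ncard_coe_finset,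
    Finset.card_product, Set.ncard_coe_finset, Set.ncard_coe_finset]

lemma gridCount_le {δ r : ℝ} (hδ : 0 < δ) (hr : 0 ≤ r) {S : Set ℂ}
    (hS : S ⊆ Metric.closedBall 0 r) :
    ({p : ℤ × ℤ | (gridBox δ p ∩ S).Nonempty}.ncard : ℝ) ≤ (2*r/δ + 2)^2 := by
  have hsub := gridCount_subset hδ hS
  have hfin : (Set.Icc ⌊(-r)/δ⌋ ⌊r/δ⌋ ×ˢ Set.Icc ⌊(-r)/δ⌋ ⌊r/δ⌋ : Set (ℤ × ℤ)).Finite :=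
    (Set.finite_Icc _ _).prod (Set.finite_Icc _ _)
  have h1 := Set.ncard_le_ncard hsub hfin
  rw [ncard_prod_fin (Set.finite_Icc _ _) (Set.finite_Icc _ _), ncard_Icc_int] at h1
  set a := ⌊(-r)/δ⌋
  set b := ⌊r/δ⌋
  have hab : ((b + 1 - a).toNat : ℝ) ≤ 2*r/δ + 2 := by
    have hba : a ≤ b := Int.floor_le_floor (by
      apply div_le_div_of_nonneg_right (by linarith) hδ.le)
    have h2 : ((b + 1 - a : ℤ) : ℝ) ≤ 2*r/δ + 2 := by
      have f1 : (b : ℝ) ≤ r/δ := Int.floor_le _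
      have f2 : (-r)/δ - 1 < (a : ℝ) := Int.sub_one_lt_floor _
      push_cast
      have : (-r)/δ = -(r/δ) := by ring
      rw [this] at f2
      have : 2*r/δ = r/δ + r/δ := by ring
      linarith
    rw [← Int.toNat_of_nonneg (show (0:ℤ) ≤ b + 1 - a by omega)] at h2
    exact_mod_cast h2
  calc ({p : ℤ × ℤ | (gridBox δ p ∩ S).Nonempty}.ncard : ℝ)
      ≤ ((b + 1 - a).toNat * (b + 1 - a).toNat : ℕ) := by exact_mod_cast h1
    _ = ((b + 1 - a).toNat : ℝ) * ((b + 1 - a).toNat : ℝ) := by push_cast; ring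
    _ ≤ (2*r/δ + 2) * (2*r/δ + 2) := by
        apply mul_le_mul hab hab (by positivity) (by positivity)
    _ = (2*r/δ + 2)^2 := by ring

lemma eventual_boxCount {F : Set ℂ} {R : ℝ} (hR : 1 ≤ R) (hFR : F ⊆ Metric.closedBall 0 R)
    {b : ℝ}
    (hM' : Filter.limsup (fun δ : ℝ => Real.log (boxCount δ F) / Real.log (1 / δ))
      (nhdsWithin 0 (Set.Ioi 0)) < b) :
    ∃ σ₀ ∈ Set.Ioc (0:ℝ) 1, ∀ σ ∈ Set.Ioo (0:ℝ) σ₀, (boxCount σ F : ℝ) ≤ (1/σ) ^ b := by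
  set f : ℝ → ℝ := fun δ => Real.log (boxCount δ F) / Real.log (1 / δ) with hf
  have hR2 : (1:ℝ) < 2*R + 2 := by linarith
  -- the log-count ratio is eventually bounded above by 4
  have hsmall : ∀ δ : ℝ, δ ∈ Set.Ioo (0:ℝ) (min 1 (1/(2*R+2))) → f δ ≤ 4 := by
    rintro δ ⟨hδ0, hδε⟩
    have hδ1 : δ < 1 := lt_of_lt_of_le hδε (min_le_left _ _)
    have hδR : δ < 1/(2*R+2) := lt_of_lt_of_le hδε (min_le_right _ _)
    have hlog1δ : 0 < Real.log (1/δ) := Real.log_pos (by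
      rw [lt_div_iff₀ hδ0]; linarith)
    rcases Nat.eq_zero_or_pos (boxCount δ F) with h0 | hpos
    · simp [hf, h0]
    · have hcnt : (boxCount δ F : ℝ) ≤ (2*R/δ + 2)^2 := gridCount_le hδ0 (by linarith) hFR
      have h2δ : (2:ℝ) ≤ 2/δ := by rw [le_div_iff₀ hδ0]; nlinarith
      have e : (2*R+2)/δ = 2*R/δ + 2/δ := by ring
      have h2 : (2*R/δ + 2) ≤ (2*R+2)/δ := by rw [e]; linarith
      have hq : (0:ℝ) < 2*R/δ + 2 := by positivity
      have hcnt' : (boxCount δ F : ℝ) ≤ ((2*R+2)/δ)^2 := le_trans hcnt (by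
        apply pow_le_pow_left₀ hq.le h2)
      have hlog : Real.log (boxCount δ F) ≤ 2 * Real.log ((2*R+2)/δ) := by
        calc Real.log (boxCount δ F) ≤ Real.log (((2*R+2)/δ)^2) :=
              Real.log_le_log (by exact_mod_cast hpos) hcnt'
          _ = 2 * Real.log ((2*R+2)/δ) := by
              rw [Real.log_pow]; push_cast; ring
      have hsplit : Real.log ((2*R+2)/δ) = Real.log (2*R+2) + Real.log (1/δ) := by
        rw [show (2*R+2)/δ = (2*R+2) * (1/δ) by ring,
          Real.log_mul (by positivity) (by positivity)]
      have hlt : Real.log (2*R+2) ≤ Real.log (1/δ) :=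
        Real.log_le_log (by positivity) (by
          rw [le_div_iff₀ hδ0]; rw [lt_div_iff₀ (by positivity : (0:ℝ) < 2*R+2)] at hδR
          linarith)
      have : Real.log (boxCount δ F) ≤ 4 * Real.log (1/δ) := by
        rw [hsplit] at hlog; linarith
      rw [hf]
      simp only [div_le_iff₀ hlog1δ]
      linarith
  have hbdd : Filter.IsBoundedUnder (· ≤ ·) (nhdsWithin 0 (Set.Ioi (0:ℝ))) f := by
    refine ⟨4, ?_⟩
    rw [Filter.eventually_map]
    filter_upwards [Ioo_mem_nhdsGT_of_mem (show (0:ℝ) ∈ Set.Ico (0:ℝ) (min 1 (1/(2*R+2))) from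
      ⟨le_refl _, by positivity⟩)] with δ hδ
    exact hsmall δ hδ
  have hev : ∀ᶠ δ in nhdsWithin 0 (Set.Ioi (0:ℝ)), f δ < b :=
    Filter.eventually_lt_of_limsup_lt hM' hbdd
  rw [Filter.eventually_iff, mem_nhdsGT_iff_exists_Ioo_subset] at hev
  obtain ⟨u, hu0, hu⟩ := hev
  refine ⟨min u 1, ⟨lt_min hu0 one_pos, min_le_right _ _⟩, ?_⟩
  rintro σ ⟨hσ0, hσu⟩
  have hσ1 : σ < 1 := lt_of_lt_of_le hσu (min_le_right _ _)
  have hfσ : f σ < b := hu ⟨hσ0, lt_of_lt_of_le hσu (min_le_left _ _)⟩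
  have hlogσ : 0 < Real.log (1/σ) := Real.log_pos (by rw [lt_div_iff₀ hσ0]; linarith)
  rcases Nat.eq_zero_or_pos (boxCount σ F) with h0 | hpos
  · rw [h0]; push_cast; positivity
  · have hflt : Real.log (boxCount σ F) < b * Real.log (1/σ) := by
      rw [hf] at hfσ; simp only [div_lt_iff₀ hlogσ] at hfσ; exact hfσ
    have hcpos : (0:ℝ) < (boxCount σ F : ℝ) := by exact_mod_cast hpos
    calc (boxCount σ F : ℝ) = Real.exp (Real.log (boxCount σ F)) := (Real.exp_log hcpos).symm
      _ ≤ Real.exp (Real.log (1/σ) * b) := by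
          apply Real.exp_le_exp.mpr; linarith [hflt]
      _ = (1/σ) ^ b := (Real.rpow_def_of_pos (by positivity) b).symm
lemma close_idx {σ : ℝ} (hσ : 0 < σ) {a b : ℤ} {x y : ℝ}
    (hx : x ∈ Set.Ico ((a:ℝ)*σ) (((a:ℝ)+1)*σ)) (hy : y ∈ Set.Ico ((b:ℝ)*σ) (((b:ℝ)+1)*σ))
    (hxy : |x - y| < 2*σ) : a - b ∈ Set.Icc (-3 : ℤ) 3 := by
  obtain ⟨hxy1, hxy2⟩ := abs_lt.mp hxy
  have h1 : ((a:ℝ) - b) * σ < 3 * σ := by nlinarith [hx.1, hx.2, hy.1, hy.2]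
  have h2 : ((b:ℝ) - a) * σ < 3 * σ := by nlinarith [hx.1, hx.2, hy.1, hy.2]
  have h1' : (a:ℝ) - b < 3 := (mul_lt_mul_iff_left₀ hσ).mp h1
  have h2' : (b:ℝ) - a < 3 := (mul_lt_mul_iff_left₀ hσ).mp h2
  have h1'' : a - b < 3 := by exact_mod_cast h1'
  have h2'' : b - a < 3 := by exact_mod_cast h2'
  constructor <;> omega

theorem near_boundary_box_count' (Ω : Set ℂ) (hΩ : Bornology.IsBounded Ω)
    (θ θ' : ℝ) (hθ : θ ∈ Set.Ioc (0 : ℝ) 1) (hθ'0 : 0 < θ') (hθ' : θ' < θ)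
    (hM : Filter.limsup (fun δ : ℝ => Real.log (boxCount δ (frontier Ω)) / Real.log (1 / δ))
      (nhdsWithin 0 (Set.Ioi 0)) = 2 - θ) :
    ∃ C : ℝ, 0 < C ∧ ∀ δ ∈ Set.Ioo (0 : ℝ) 1, ∀ l : ℕ, 1 ≤ l →
      (Set.ncard {p : ℤ × ℤ | (gridBox δ p ∩ Ω).Nonempty ∧
        ∃ z ∈ gridBox δ p, Metric.infDist z (frontier Ω) ≤ (l : ℝ) * δ} : ℝ) ≤
        C * (1 / δ) ^ ((2 : ℝ) - θ') * (l : ℝ) ^ θ' := by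
  obtain ⟨hθ0, hθ1⟩ := hθ
  by_cases hΩe : Ω = ∅
  · refine ⟨1, one_pos, ?_⟩
    rintro δ ⟨hδ0, hδ1⟩ l hl
    have hz : {p : ℤ × ℤ | (gridBox δ p ∩ Ω).Nonempty ∧
        ∃ z ∈ gridBox δ p, Metric.infDist z (frontier Ω) ≤ (l : ℝ) * δ} = ∅ := by
      ext p; simp [hΩe]
    rw [hz, Set.ncard_empty]
    push_cast
    positivity
  have hΩne : Ω.Nonempty := Set.nonempty_iff_ne_empty.mpr hΩe
  have hFne : (frontier Ω).Nonempty := by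
    rw [Set.nonempty_iff_ne_empty]
    intro h
    have hclopen : IsClopen Ω := isClopen_iff_frontier_eq_empty.mpr h
    rcases isClopen_iff.mp hclopen with h1 | h1
    · exact hΩe h1
    · rw [h1] at hΩ
      obtain ⟨r, hr⟩ := (Metric.isBounded_iff_subset_closedBall 0).mp hΩ
      have h0 : (0:ℂ) ∈ Metric.closedBall (0:ℂ) r := hr (Set.mem_univ _)
      have hr0 : 0 ≤ r := by simpa using h0
      have hcon := hr (Set.mem_univ ((r+1 : ℝ) : ℂ))
      rw [Metric.mem_closedBall, Complex.dist_eq, sub_zero, Complex.norm_real, Real.norm_eq_abs,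
        abs_of_nonneg (by linarith)] at hcon
      linarith
  obtain ⟨R0, hR0⟩ := (Metric.isBounded_iff_subset_closedBall 0).mp hΩ
  set R := max R0 1 with hRdef
  have hR1 : (1:ℝ) ≤ R := le_max_right _ _
  have hRΩ : Ω ⊆ Metric.closedBall 0 R :=
    hR0.trans (Metric.closedBall_subset_closedBall (le_max_left _ _))
  have hRF : frontier Ω ⊆ Metric.closedBall 0 R :=
    frontier_subset_closure.trans (closure_minimal hRΩ Metric.isClosed_closedBall)
  have hlimlt : Filter.limsup (fun δ : ℝ => Real.log (boxCount δ (frontier Ω)) / Real.log (1 / δ))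
      (nhdsWithin 0 (Set.Ioi 0)) < 2 - θ' := by rw [hM]; linarith
  obtain ⟨σ₀, ⟨hσ₀0, hσ₀1⟩, hσ₀⟩ := eventual_boxCount hR1 hRF hlimlt
  set C1 : ℝ := (2*R+2)^2 / σ₀ ^ θ' with hC1
  have hC1pos : 0 < C1 := by positivity
  refine ⟨C1 + 49, by positivity, ?_⟩
  rintro δ ⟨hδ0, hδ1⟩ l hl
  have hl0 : (0:ℝ) < l := by exact_mod_cast hl
  have hA : (0:ℝ) < (1/δ) ^ ((2:ℝ) - θ') := by positivity
  have hB : (0:ℝ) < (l:ℝ) ^ θ' := by positivity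
  set σ := (l:ℝ) * δ with hσdef
  have hσ0 : 0 < σ := by positivity
  by_cases hcase : σ < σ₀
  · -- main case: use Minkowski dimension bound at scale σ
    have hσ1 : σ < 1 := lt_of_lt_of_le hcase hσ₀1
    set Q : Set (ℤ×ℤ) := {q | ∃ z ∈ gridBox σ q, Metric.infDist z (frontier Ω) ≤ σ} with hQ
    have hQfin : Q.Finite := by
      apply Set.Finite.subset (gridCount_fin hσ0 (subset_refl (Metric.closedBall (0:ℂ) (R+2))))
      rintro q ⟨z, hz, hd⟩
      refine ⟨z, hz, ?_⟩
      obtain ⟨w, hwF, hw⟩ := (Metric.infDist_lt_iff hFne).mp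
        (lt_of_le_of_lt hd (by linarith : σ < σ + 1))
      have hwR : ‖w‖ ≤ R := by
        have := hRF hwF
        rwa [Metric.mem_closedBall, Complex.dist_eq, sub_zero] at this
      rw [Metric.mem_closedBall, Complex.dist_eq, sub_zero]
      calc ‖z‖ = ‖(z - w) + w‖ := by ring_nf
        _ ≤ ‖z - w‖ + ‖w‖ := norm_add_le _ _
        _ = dist z w + ‖w‖ := by rw [Complex.dist_eq]
        _ ≤ R + 2 := by linarith
    have hlZ : (0:ℤ) < (l:ℤ) := by exact_mod_cast hl
    -- first injection: fine boxes into (coarse box, residue)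
    have key1 : Set.ncard {p : ℤ × ℤ | (gridBox δ p ∩ Ω).Nonempty ∧
        ∃ z ∈ gridBox δ p, Metric.infDist z (frontier Ω) ≤ (l : ℝ) * δ} ≤ Q.ncard * (l * l) := by
      have hT1fin : (Q ×ˢ (Set.Ico (0:ℤ) (l:ℤ) ×ˢ Set.Ico (0:ℤ) (l:ℤ))).Finite :=
        hQfin.prod ((Set.finite_Ico _ _).prod (Set.finite_Ico _ _))
      have step := Set.ncard_le_ncard_of_injOn
        (s := {p : ℤ × ℤ | (gridBox δ p ∩ Ω).Nonempty ∧
          ∃ z ∈ gridBox δ p, Metric.infDist z (frontier Ω) ≤ (l : ℝ) * δ})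
        (fun p : ℤ×ℤ => ((p.1 / (l:ℤ), p.2 / (l:ℤ)), (p.1 % (l:ℤ), p.2 % (l:ℤ))))
        ?_ ?_ hT1fin
      · rw [ncard_prod_fin hQfin ((Set.finite_Ico _ _).prod (Set.finite_Ico _ _)),
          ncard_prod_fin (Set.finite_Ico _ _) (Set.finite_Ico _ _), ncard_Ico_int] at step
        simpa using step
      · rintro p ⟨-, z, hz, hd⟩
        refine ⟨⟨z, gridBox_subset_coarse hδ0 hl p hz, hd⟩, ⟨?_, ?_⟩, ⟨?_, ?_⟩⟩
        · exact Int.emod_nonneg _ (ne_of_gt hlZ)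
        · exact Int.emod_lt_of_pos _ hlZ
        · exact Int.emod_nonneg _ (ne_of_gt hlZ)
        · exact Int.emod_lt_of_pos _ hlZ
      · rintro p - q - h
        simp only [Prod.mk.injEq] at h
        obtain ⟨⟨h1, h2⟩, h3, h4⟩ := h
        have e1 := Int.mul_ediv_add_emod p.1 (l:ℤ)
        have e2 := Int.mul_ediv_add_emod q.1 (l:ℤ)
        have e3 := Int.mul_ediv_add_emod p.2 (l:ℤ)
        have e4 := Int.mul_ediv_add_emod q.2 (l:ℤ)
        rw [h1, h3] at e1
        rw [h2, h4] at e3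
        have : p.1 = q.1 := by linarith
        have : p.2 = q.2 := by linarith
        exact Prod.ext_iff.mpr ⟨by assumption, by assumption⟩
    -- second injection: coarse boxes near the boundary into (boundary box, offset)
    have key2 : Q.ncard ≤ boxCount σ (frontier Ω) * 49 := by
      have hBCfin : {q : ℤ×ℤ | (gridBox σ q ∩ frontier Ω).Nonempty}.Finite :=
        gridCount_fin hσ0 hRF
      have hex : ∀ q : ℤ×ℤ, ∃ q' : ℤ×ℤ, q ∈ Q →
          (gridBox σ q' ∩ frontier Ω).Nonempty ∧
          q.1 - q'.1 ∈ Set.Icc (-3:ℤ) 3 ∧ q.2 - q'.2 ∈ Set.Icc (-3:ℤ) 3 := by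
        intro q
        by_cases hq : q ∈ Q
        · obtain ⟨z, hz, hd⟩ := hq
          obtain ⟨w, hwF, hw⟩ := (Metric.infDist_lt_iff hFne).mp
            (lt_of_le_of_lt hd (by linarith : σ < 2*σ))
          refine ⟨(⌊w.re/σ⌋, ⌊w.im/σ⌋), fun _ => ⟨⟨w, mem_gridBox_floor hσ0 w, hwF⟩, ?_, ?_⟩⟩
          · refine close_idx hσ0 hz.1 (mem_idx hσ0 w.re) ?_
            calc |z.re - w.re| = |(z-w).re| := by rw [Complex.sub_re]
              _ ≤ ‖z-w‖ := Complex.abs_re_le_norm _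
              _ = dist z w := (Complex.dist_eq z w).symm
              _ < 2*σ := hw
          · refine close_idx hσ0 hz.2 (mem_idx hσ0 w.im) ?_
            calc |z.im - w.im| = |(z-w).im| := by rw [Complex.sub_im]
              _ ≤ ‖z-w‖ := Complex.abs_im_le_norm _
              _ = dist z w := (Complex.dist_eq z w).symm
              _ < 2*σ := hw
        · exact ⟨q, fun h => absurd h hq⟩
      choose g hg using hex
      have step := Set.ncard_le_ncard_of_injOn (s := Q)
        (fun q : ℤ×ℤ => (g q, (q.1 - (g q).1, q.2 - (g q).2)))
        (fun q hq => by
          obtain ⟨h1, h2, h3⟩ := hg q hq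
          exact ⟨h1, h2, h3⟩)
        (fun q hq q2 hq2 h => by
          have hg12 : g q = g q2 := congrArg Prod.fst h
          have hsub := congrArg Prod.snd h
          simp only [Prod.mk.injEq] at hsub
          obtain ⟨hs1, hs2⟩ := hsub
          rw [hg12] at hs1 hs2
          exact Prod.ext_iff.mpr ⟨by omega, by omega⟩)
        (hBCfin.prod ((Set.finite_Icc _ _).prod (Set.finite_Icc _ _)))
      rw [ncard_prod_fin hBCfin ((Set.finite_Icc _ _).prod (Set.finite_Icc _ _)),
        ncard_prod_fin (Set.finite_Icc _ _) (Set.finite_Icc _ _), ncard_Icc_int] at step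
      have h7 : ((3:ℤ) + 1 - (-3)).toNat = 7 := by decide
      rw [h7] at step
      exact le_trans step (by rfl)
    have hbc : (boxCount σ (frontier Ω) : ℝ) ≤ (1/σ) ^ ((2:ℝ) - θ') := hσ₀ σ ⟨hσ0, hcase⟩
    have h1 : (Set.ncard {p : ℤ × ℤ | (gridBox δ p ∩ Ω).Nonempty ∧
        ∃ z ∈ gridBox δ p, Metric.infDist z (frontier Ω) ≤ (l : ℝ) * δ} : ℝ)
        ≤ (Q.ncard : ℝ) * ((l:ℝ) * l) := by exact_mod_cast key1
    have h2 : (Q.ncard:ℝ) ≤ (boxCount σ (frontier Ω) : ℝ) * 49 := by exact_mod_cast key2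
    have harith : (1/σ)^((2:ℝ)-θ') * ((l:ℝ)*(l:ℝ)) = (1/δ)^((2:ℝ)-θ') * (l:ℝ)^θ' := by
      have e2 : (l:ℝ)^(2:ℝ) = (l:ℝ)*l := by
        rw [show (2:ℝ) = ((2:ℕ):ℝ) by norm_num, Real.rpow_natCast, pow_two]
      have e3 : (l:ℝ)^(2:ℝ) / (l:ℝ)^((2:ℝ)-θ') = (l:ℝ)^θ' := by
        rw [← Real.rpow_sub hl0]; ring_nf
      calc (1/σ)^((2:ℝ)-θ') * ((l:ℝ)*(l:ℝ))
          = ((1/δ) * ((l:ℝ))⁻¹)^((2:ℝ)-θ') * ((l:ℝ)*l) := by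
            rw [hσdef, one_div, mul_inv_rev, one_div]
        _ = (1/δ)^((2:ℝ)-θ') * (((l:ℝ))⁻¹)^((2:ℝ)-θ') * ((l:ℝ)*l) := by
            rw [Real.mul_rpow (by positivity) (by positivity)]
        _ = (1/δ)^((2:ℝ)-θ') * ((l:ℝ)^((2:ℝ)-θ'))⁻¹ * ((l:ℝ)*l) := by
            rw [Real.inv_rpow hl0.le]
        _ = (1/δ)^((2:ℝ)-θ') * ((l:ℝ)^(2:ℝ) / (l:ℝ)^((2:ℝ)-θ')) := by
            rw [e2]; ring
        _ = (1/δ)^((2:ℝ)-θ') * (l:ℝ)^θ' := by rw [e3]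
    have hσA : (0:ℝ) < (1/σ)^((2:ℝ)-θ') := by positivity
    calc (Set.ncard {p : ℤ × ℤ | (gridBox δ p ∩ Ω).Nonempty ∧
        ∃ z ∈ gridBox δ p, Metric.infDist z (frontier Ω) ≤ (l : ℝ) * δ} : ℝ)
        ≤ (Q.ncard : ℝ) * ((l:ℝ) * l) := h1
      _ ≤ ((boxCount σ (frontier Ω) : ℝ) * 49) * ((l:ℝ) * l) := by
          apply mul_le_mul_of_nonneg_right h2 (by positivity)
      _ ≤ ((1/σ)^((2:ℝ)-θ') * 49) * ((l:ℝ) * l) := by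
          apply mul_le_mul_of_nonneg_right (mul_le_mul_of_nonneg_right hbc (by norm_num))
            (by positivity)
      _ = 49 * ((1/σ)^((2:ℝ)-θ') * ((l:ℝ) * l)) := by ring
      _ = 49 * ((1/δ)^((2:ℝ)-θ') * (l:ℝ)^θ') := by rw [harith]
      _ ≤ (C1 + 49) * ((1/δ)^((2:ℝ)-θ') * (l:ℝ)^θ') :=
          mul_le_mul_of_nonneg_right (by linarith) (by positivity)
      _ = (C1 + 49) * (1/δ)^((2:ℝ)-θ') * (l:ℝ)^θ' := by ring
  · -- trivial case: σ₀ ≤ l·δ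
    push_neg at hcase
    have htriv : (Set.ncard {p : ℤ × ℤ | (gridBox δ p ∩ Ω).Nonempty ∧
        ∃ z ∈ gridBox δ p, Metric.infDist z (frontier Ω) ≤ (l : ℝ) * δ} : ℝ)
        ≤ (2*R/δ + 2)^2 := by
      have hsub : {p : ℤ × ℤ | (gridBox δ p ∩ Ω).Nonempty ∧
          ∃ z ∈ gridBox δ p, Metric.infDist z (frontier Ω) ≤ (l : ℝ) * δ} ⊆
          {p : ℤ × ℤ | (gridBox δ p ∩ Ω).Nonempty} := fun p hp => hp.1
      have hmono := Set.ncard_le_ncard hsub (gridCount_fin hδ0 hRΩ)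
      exact le_trans (by exact_mod_cast hmono) (gridCount_le hδ0 (by linarith) hRΩ)
    have h2δ : (2:ℝ) ≤ 2/δ := by rw [le_div_iff₀ hδ0]; nlinarith
    have h2 : (2*R/δ+2)^2 ≤ ((2*R+2)/δ)^2 := by
      apply pow_le_pow_left₀ (by positivity)
      have e : (2*R+2)/δ = 2*R/δ + 2/δ := by ring
      rw [e]; linarith
    have h3 : ((2*R+2)/δ)^2 = (2*R+2)^2 * (1/δ)^(2:ℕ) := by ring
    have h4 : ((1:ℝ)/δ)^(2:ℕ) = (1/δ)^((2:ℝ)-θ') * (1/δ)^θ' := by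
      rw [← Real.rpow_natCast (1/δ) 2, ← Real.rpow_add (by positivity)]
      norm_num
    have h5 : ((1:ℝ)/δ)^θ' ≤ ((l:ℝ)/σ₀)^θ' := by
      apply Real.rpow_le_rpow (by positivity) ?_ hθ'0.le
      rw [div_le_div_iff₀ hδ0 hσ₀0]
      calc 1 * σ₀ = σ₀ := one_mul _
        _ ≤ (l:ℝ) * δ := hcase
    have h6 : ((l:ℝ)/σ₀)^θ' = (l:ℝ)^θ' / σ₀^θ' := Real.div_rpow hl0.le hσ₀0.le θ'
    calc (Set.ncard {p : ℤ × ℤ | (gridBox δ p ∩ Ω).Nonempty ∧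
        ∃ z ∈ gridBox δ p, Metric.infDist z (frontier Ω) ≤ (l : ℝ) * δ} : ℝ)
        ≤ (2*R/δ + 2)^2 := htriv
      _ ≤ ((2*R+2)/δ)^2 := h2
      _ = (2*R+2)^2 * (1/δ)^(2:ℕ) := h3
      _ = (2*R+2)^2 * ((1/δ)^((2:ℝ)-θ') * (1/δ)^θ') := by rw [h4]
      _ ≤ (2*R+2)^2 * ((1/δ)^((2:ℝ)-θ') * ((l:ℝ)^θ' / σ₀^θ')) := by
          rw [← h6]
          apply mul_le_mul_of_nonneg_left (mul_le_mul_of_nonneg_left h5 hA.le) (by positivity)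
      _ = C1 * ((1/δ)^((2:ℝ)-θ') * (l:ℝ)^θ') := by rw [hC1]; ring
      _ ≤ (C1 + 49) * ((1/δ)^((2:ℝ)-θ') * (l:ℝ)^θ') :=
          mul_le_mul_of_nonneg_right (by linarith) (by positivity)
      _ = (C1 + 49) * (1/δ)^((2:ℝ)-θ') * (l:ℝ)^θ' := by ring

/-- If `Ω` is bounded with `M(∂Ω) = 2 - θ` and `θ' < θ`, then there is a constant
`C_{θ'}` with `N_l ≤ C_{θ'} n^{2-θ'} l^{θ'}` for all meshes `δ` (with `n = δ⁻¹`) and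
all `l ≥ 1`. -/
theorem near_boundary_box_count (Ω : Set ℂ) (hΩ : Bornology.IsBounded Ω)
    (θ θ' : ℝ) (hθ : θ ∈ Set.Ioc (0 : ℝ) 1) (hθ'0 : 0 < θ') (hθ' : θ' < θ)
    (hM : upperMinkDim (frontier Ω) = 2 - θ) :
    ∃ C : ℝ, 0 < C ∧ ∀ δ ∈ Set.Ioo (0 : ℝ) 1, ∀ l : ℕ, 1 ≤ l →
      (nearBoundaryCount Ω δ l : ℝ) ≤ C * (1 / δ) ^ ((2 : ℝ) - θ') * (l : ℝ) ^ θ' := by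
  obtain ⟨C, hC, hbound⟩ := near_boundary_box_count' Ω hΩ θ θ' hθ hθ'0 hθ' (by rw [← hM]; rfl)
  exact ⟨C, hC, fun δ hδ l hl => by simpa [nearBoundaryCount] using hbound δ hδ l hl⟩
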